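/- arXiv:0805.3443 — 2 statements merged into one kernel-verified Lean document; each statement's English description precedes it below -/
import Mathlib

section
/- With H₁ = (p₁²+p₂²)/2 - α₁/(2q₁²) - α₂/(2q₂²), H₂ = (p₁²-p₂²)/2 - α₁/(2q₁²) + α₂/(2q₂²), and K = -p₁q₁(H₁-H₂) + p₂q₂(H₁+H₂), the Poisson bracket satisfies {H₁, K} = 0, i.e., K is a (cubic in momenta) integral of motion of H₁. -/
noncomputable def pb (F G : ℝ → ℝ → ℝ → ℝ → ℝ) (q₁ q₂ p₁ p₂ : ℝ) : ℝ :=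
  deriv (fun t => F q₁ q₂ t p₂) p₁ * deriv (fun t => G t q₂ p₁ p₂) q₁
  - deriv (fun t => F t q₂ p₁ p₂) q₁ * deriv (fun t => G q₁ q₂ t p₂) p₁
  + deriv (fun t => F q₁ q₂ p₁ t) p₂ * deriv (fun t => G q₁ t p₁ p₂) q₂
  - deriv (fun t => F q₁ t p₁ p₂) q₂ * deriv (fun t => G q₁ q₂ p₁ t) p₂

noncomputable def H₁cal (α₁ α₂ : ℝ) : ℝ → ℝ → ℝ → ℝ → ℝ :=
  fun q₁ q₂ p₁ p₂ => (p₁^2 + p₂^2)/2 - α₁/(2*q₁^2) - α₂/(2*q₂^2)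

noncomputable def H₂cal (α₁ α₂ : ℝ) : ℝ → ℝ → ℝ → ℝ → ℝ :=
  fun q₁ q₂ p₁ p₂ => (p₁^2 - p₂^2)/2 - α₁/(2*q₁^2) + α₂/(2*q₂^2)

noncomputable def Kcal (α₁ α₂ : ℝ) : ℝ → ℝ → ℝ → ℝ → ℝ :=
  fun q₁ q₂ p₁ p₂ =>
    -p₁*q₁*(H₁cal α₁ α₂ q₁ q₂ p₁ p₂ - H₂cal α₁ α₂ q₁ q₂ p₁ p₂)
    + p₂*q₂*(H₁cal α₁ α₂ q₁ q₂ p₁ p₂ + H₂cal α₁ α₂ q₁ q₂ p₁ p₂)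

private lemma key2 (a : ℝ) {x : ℝ} (hx : x ≠ 0) :
    HasDerivAt (fun t : ℝ => a / t ^ 2) (-2 * a / x ^ 3) x := by
  have h2 : HasDerivAt (fun t : ℝ => t ^ 2) (2 * x) x := by
    simpa using hasDerivAt_pow 2 x
  have := (hasDerivAt_const x a).div h2 (by positivity)
  refine this.congr_deriv ?_
  field_simp
  ring

private lemma key1 (a : ℝ) {x : ℝ} (hx : x ≠ 0) :
    HasDerivAt (fun t : ℝ => a / (2 * t ^ 2)) (-a / x ^ 3) x := by
  have h2 : HasDerivAt (fun t : ℝ => 2 * t ^ 2) (2 * (2 * x)) x := by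
    simpa using (hasDerivAt_pow 2 x).const_mul 2
  have := (hasDerivAt_const x a).div h2 (by positivity)
  refine this.congr_deriv ?_
  field_simp
  ring

private lemma hlin (c x : ℝ) : HasDerivAt (fun t : ℝ => c * t) c x := by
  simpa using (hasDerivAt_id x).const_mul c

theorem stmt1 (α₁ α₂ : ℝ) (q₁ q₂ p₁ p₂ : ℝ) (hq₁ : q₁ ≠ 0) (hq₂ : q₂ ≠ 0) :
    pb (H₁cal α₁ α₂) (Kcal α₁ α₂) q₁ q₂ p₁ p₂ = 0 := by
  have hsq : HasDerivAt (fun t : ℝ => t ^ 2) (2 * p₁) p₁ := by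
    simpa using hasDerivAt_pow 2 p₁
  have hsq2 : HasDerivAt (fun t : ℝ => t ^ 2) (2 * p₂) p₂ := by
    simpa using hasDerivAt_pow 2 p₂
  -- slices of K
  have hKq₁ : (fun t => Kcal α₁ α₂ t q₂ p₁ p₂)
      = fun t => -p₁ * t * (p₂^2 - α₂/q₂^2) + p₂ * q₂ * (p₁^2 - α₁/t^2) := by
    funext t
    rcases eq_or_ne t 0 with h | h
    · simp [Kcal, H₁cal, H₂cal, h]
      exact Or.inl (by ring)
    · simp only [Kcal, H₁cal, H₂cal]
      field_simp
      ring
  have hKp₁ : (fun t => Kcal α₁ α₂ q₁ q₂ t p₂)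
      = fun t => -t * q₁ * (p₂^2 - α₂/q₂^2) + p₂ * q₂ * (t^2 - α₁/q₁^2) := by
    funext t
    simp only [Kcal, H₁cal, H₂cal]
    field_simp
    ring
  have hKq₂ : (fun t => Kcal α₁ α₂ q₁ t p₁ p₂)
      = fun t => -p₁ * q₁ * (p₂^2 - α₂/t^2) + p₂ * t * (p₁^2 - α₁/q₁^2) := by
    funext t
    rcases eq_or_ne t 0 with h | h
    · simp [Kcal, H₁cal, H₂cal, h]
      exact Or.inl (by ring)
    · simp only [Kcal, H₁cal, H₂cal]
      field_simp
      ring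
  have hKp₂ : (fun t => Kcal α₁ α₂ q₁ q₂ p₁ t)
      = fun t => -p₁ * q₁ * (t^2 - α₂/q₂^2) + t * q₂ * (p₁^2 - α₁/q₁^2) := by
    funext t
    simp only [Kcal, H₁cal, H₂cal]
    field_simp
    ring
  -- derivatives of H₁
  have dFp₁ : deriv (fun t => H₁cal α₁ α₂ q₁ q₂ t p₂) p₁ = p₁ := by
    have hsl : (fun t => H₁cal α₁ α₂ q₁ q₂ t p₂)
        = fun t : ℝ => (t^2 + p₂^2)/2 - α₁/(2*q₁^2) - α₂/(2*q₂^2) := rfl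
    have h := (((hsq.add_const (p₂^2)).div_const 2).sub_const
      (α₁/(2*q₁^2))).sub_const (α₂/(2*q₂^2))
    rw [hsl, h.deriv]; ring
  have dFp₂ : deriv (fun t => H₁cal α₁ α₂ q₁ q₂ p₁ t) p₂ = p₂ := by
    have hsl : (fun t => H₁cal α₁ α₂ q₁ q₂ p₁ t)
        = fun t : ℝ => (p₁^2 + t^2)/2 - α₁/(2*q₁^2) - α₂/(2*q₂^2) := rfl
    have h := (((hsq2.const_add (p₁^2)).div_const 2).sub_const
      (α₁/(2*q₁^2))).sub_const (α₂/(2*q₂^2))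
    rw [hsl, h.deriv]; ring
  have dFq₁ : deriv (fun t => H₁cal α₁ α₂ t q₂ p₁ p₂) q₁ = α₁ / q₁^3 := by
    have hsl : (fun t => H₁cal α₁ α₂ t q₂ p₁ p₂)
        = fun t : ℝ => (p₁^2 + p₂^2)/2 - α₁/(2*t^2) - α₂/(2*q₂^2) := rfl
    have h := (((key1 α₁ hq₁).const_sub ((p₁^2 + p₂^2)/2)).sub_const
      (α₂/(2*q₂^2)))
    rw [hsl, h.deriv]; ring
  have dFq₂ : deriv (fun t => H₁cal α₁ α₂ q₁ t p₁ p₂) q₂ = α₂ / q₂^3 := by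
    have hsl : (fun t => H₁cal α₁ α₂ q₁ t p₁ p₂)
        = fun t : ℝ => (p₁^2 + p₂^2)/2 - α₁/(2*q₁^2) - α₂/(2*t^2) := rfl
    have h := (key1 α₂ hq₂).const_sub ((p₁^2 + p₂^2)/2 - α₁/(2*q₁^2))
    rw [hsl, h.deriv]; ring
  -- derivatives of K
  have dGq₁ : deriv (fun t => Kcal α₁ α₂ t q₂ p₁ p₂) q₁
      = -p₁ * (p₂^2 - α₂/q₂^2) + p₂ * q₂ * (2 * α₁ / q₁^3) := by
    rw [hKq₁]
    have h1 : HasDerivAt (fun t : ℝ => -p₁ * t * (p₂^2 - α₂/q₂^2))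
        (-p₁ * (p₂^2 - α₂/q₂^2)) q₁ := by
      have e : (fun t : ℝ => -p₁ * t * (p₂^2 - α₂/q₂^2))
          = fun t : ℝ => (-p₁ * (p₂^2 - α₂/q₂^2)) * t := by funext t; ring
      rw [e]; exact hlin _ _
    have h2 : HasDerivAt (fun t : ℝ => p₂ * q₂ * (p₁^2 - α₁/t^2))
        (p₂ * q₂ * (2 * α₁ / q₁^3)) q₁ := by
      have := ((key2 α₁ hq₁).const_sub (p₁^2)).const_mul (p₂ * q₂)
      refine this.congr_deriv ?_
      ring
    exact (h1.add h2).deriv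
  have dGp₁ : deriv (fun t => Kcal α₁ α₂ q₁ q₂ t p₂) p₁
      = -q₁ * (p₂^2 - α₂/q₂^2) + p₂ * q₂ * (2 * p₁) := by
    rw [hKp₁]
    have h1 : HasDerivAt (fun t : ℝ => -t * q₁ * (p₂^2 - α₂/q₂^2))
        (-q₁ * (p₂^2 - α₂/q₂^2)) p₁ := by
      have e : (fun t : ℝ => -t * q₁ * (p₂^2 - α₂/q₂^2))
          = fun t : ℝ => (-q₁ * (p₂^2 - α₂/q₂^2)) * t := by funext t; ring
      rw [e]; exact hlin _ _
    have h2 : HasDerivAt (fun t : ℝ => p₂ * q₂ * (t^2 - α₁/q₁^2))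
        (p₂ * q₂ * (2 * p₁)) p₁ := by
      exact (hsq.sub_const (α₁/q₁^2)).const_mul (p₂ * q₂)
    exact (h1.add h2).deriv
  have dGq₂ : deriv (fun t => Kcal α₁ α₂ q₁ t p₁ p₂) q₂
      = -p₁ * q₁ * (2 * α₂ / q₂^3) + p₂ * (p₁^2 - α₁/q₁^2) := by
    rw [hKq₂]
    have h1 : HasDerivAt (fun t : ℝ => -p₁ * q₁ * (p₂^2 - α₂/t^2))
        (-p₁ * q₁ * (2 * α₂ / q₂^3)) q₂ := by
      have := ((key2 α₂ hq₂).const_sub (p₂^2)).const_mul (-p₁ * q₁)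
      refine this.congr_deriv ?_
      ring
    have h2 : HasDerivAt (fun t : ℝ => p₂ * t * (p₁^2 - α₁/q₁^2))
        (p₂ * (p₁^2 - α₁/q₁^2)) q₂ := by
      have e : (fun t : ℝ => p₂ * t * (p₁^2 - α₁/q₁^2))
          = fun t : ℝ => (p₂ * (p₁^2 - α₁/q₁^2)) * t := by funext t; ring
      rw [e]; exact hlin _ _
    exact (h1.add h2).deriv
  have dGp₂ : deriv (fun t => Kcal α₁ α₂ q₁ q₂ p₁ t) p₂
      = -p₁ * q₁ * (2 * p₂) + q₂ * (p₁^2 - α₁/q₁^2) := by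
    rw [hKp₂]
    have h1 : HasDerivAt (fun t : ℝ => -p₁ * q₁ * (t^2 - α₂/q₂^2))
        (-p₁ * q₁ * (2 * p₂)) p₂ :=
      (hsq2.sub_const (α₂/q₂^2)).const_mul (-p₁ * q₁)
    have h2 : HasDerivAt (fun t : ℝ => t * q₂ * (p₁^2 - α₁/q₁^2))
        (q₂ * (p₁^2 - α₁/q₁^2)) p₂ := by
      have e : (fun t : ℝ => t * q₂ * (p₁^2 - α₁/q₁^2))
          = fun t : ℝ => (q₂ * (p₁^2 - α₁/q₁^2)) * t := by funext t; ring
      rw [e]; exact hlin _ _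
    exact (h1.add h2).deriv
  rw [pb, dFp₁, dFp₂, dFq₁, dFq₂, dGq₁, dGp₁, dGq₂, dGp₂]
  field_simp
  ring
end

section
/- If a, b, β, βᵍ, βʰ, κ are real numbers with a ≠ 0, b ≠ 0, k ≠ 0, κ ≠ 0, and the identity abkκ·q^{m+k-1} = b²β·q^{2k} + bβᵍ·q^{k} + βʰ holds for all q > 0, then after differentiating and clearing, the identity (m-k-1)b²β·q^{k} + (m-1)bβᵍ + (m+k-1)βʰ·q^{-k} = 0 holds for all q > 0. -/
theorem stmt7 (a b k m κ β βg βh : ℝ)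
    (ha : a ≠ 0) (hb : b ≠ 0) (hk : k ≠ 0) (hκ : κ ≠ 0)
    (hid : ∀ q : ℝ, 0 < q →
      a*b*k*κ * q ^ (m + k - 1) = b^2*β * q ^ (2*k) + b*βg * q ^ k + βh) :
    ∀ q : ℝ, 0 < q →
      (m - k - 1)*b^2*β * q ^ k + (m - 1)*b*βg + (m + k - 1)*βh * q ^ (-k) = 0 := by
  intro q hq
  have hq' : q ≠ 0 := ne_of_gt hq
  set g : ℝ → ℝ := fun x =>
    a*b*k*κ * x ^ (m + k - 1) - (b^2*β * x ^ (2*k) + b*βg * x ^ k + βh) with hgdef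
  have hg0 : ∀ x ∈ Set.Ioi (0:ℝ), g x = 0 := by
    intro x hx
    simp only [hgdef, sub_eq_zero]
    exact hid x hx
  have hD : HasDerivAt g
      (a*b*k*κ * ((m+k-1) * q ^ (m+k-1-1))
        - (b^2*β * ((2*k) * q ^ (2*k-1)) + b*βg * (k * q ^ (k-1)))) q := by
    have h1 := (Real.hasDerivAt_rpow_const (x := q) (p := m+k-1) (Or.inl hq')).const_mul (a*b*k*κ)
    have h2 := (Real.hasDerivAt_rpow_const (x := q) (p := 2*k) (Or.inl hq')).const_mul (b^2*β)
    have h3 := (Real.hasDerivAt_rpow_const (x := q) (p := k) (Or.inl hq')).const_mul (b*βg)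
    exact h1.sub ((h2.add h3).add_const βh)
  have hzero : HasDerivAt g 0 q := by
    have hev : g =ᶠ[nhds q] fun _ => 0 := by
      filter_upwards [Ioi_mem_nhds hq] with x hx using hg0 x hx
    exact (hasDerivAt_const q 0).congr_of_eventuallyEq hev
  have heq := hD.unique hzero
  have H := hid q hq
  have hQpos : (0:ℝ) < q ^ k := Real.rpow_pos_of_pos hq k
  have hQ : q ^ k ≠ 0 := ne_of_gt hQpos
  have e2k : q ^ (2*k) = (q ^ k)^2 := by
    rw [two_mul, Real.rpow_add hq]; ring
  have enk : q ^ (-k) = (q ^ k)⁻¹ := by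
    rw [Real.rpow_neg hq.le]
  have eP : q ^ (m+k-1-1) = q ^ (m+k-1) / q := by
    rw [Real.rpow_sub hq, Real.rpow_one]
  have e2k1 : q ^ (2*k-1) = (q ^ k)^2 / q := by
    rw [Real.rpow_sub hq, Real.rpow_one, e2k]
  have ek1 : q ^ (k-1) = q ^ k / q := by
    rw [Real.rpow_sub hq, Real.rpow_one]
  rw [eP, e2k1, ek1] at heq
  rw [e2k] at H
  field_simp at heq
  have hC : (m-k-1)*b^2*β*(q^k)^2 + (m-1)*b*βg*(q^k) + (m+k-1)*βh = 0 := by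
    linear_combination heq - (m+k-1) * H
  rw [enk]
  field_simp
  linear_combination hC
end
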